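/- Let z, z' ∈ ℂ^n be unit vectors with |⟨z, z'⟩| ≤ δ, and let v ∈ ℂ^n be a unit vector with |⟨v, z⟩|² ≥ 1 − ψ for some ψ ≥ 0. If δ ≤ √(2ψ) ≤ 1/2, then |⟨v, z'⟩|² ≤ 4√(2ψ). -/

import Mathlib

open scoped BigOperators

noncomputable section

/-- The standard Hermitian inner product on `ℂ^n`. -/
def hInner {n : ℕ} (x y : Fin n → ℂ) : ℂ := ∑ i, (starRingEnd ℂ) (x i) * y i

/-- The `ℓ₂` norm on `ℂ^n`. -/
def hNorm {n : ℕ} (x : Fin n → ℂ) : ℝ := Real.sqrt (∑ i, ‖x i‖ ^ 2)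

open scoped InnerProductSpace in
lemma hInner_eq {n : ℕ} (x y : Fin n → ℂ) :
    hInner x y = ⟪(EuclideanSpace.equiv (Fin n) ℂ).symm x,
      (EuclideanSpace.equiv (Fin n) ℂ).symm y⟫_ℂ := by
  simp [hInner, PiLp.inner_apply, RCLike.inner_apply]
  exact Finset.sum_congr rfl (fun i _ => mul_comm _ _)

lemma hNorm_eq {n : ℕ} (x : Fin n → ℂ) :
    hNorm x = ‖(EuclideanSpace.equiv (Fin n) ℂ).symm x‖ := by
  rw [EuclideanSpace.norm_eq]
  rfl

open scoped InnerProductSpace in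
/-- if `z, z'` are unit vectors with `|⟨z,z'⟩| ≤ δ`, and `v` is a unit
vector with `|⟨v,z⟩|² ≥ 1 − ψ`, where `δ ≤ √(2ψ) ≤ 1/2`, then `|⟨v,z'⟩|² ≤ 4√(2ψ)`. -/
theorem stmt19 {n : ℕ} (z z' v : Fin n → ℂ)
    (hz : hNorm z = 1) (hz' : hNorm z' = 1) (hv : hNorm v = 1)
    (δ ψ : ℝ) (hψ : 0 ≤ ψ)
    (hzz' : ‖hInner z z'‖ ≤ δ)
    (hvz : 1 - ψ ≤ ‖hInner v z‖ ^ 2)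
    (hδ : δ ≤ Real.sqrt (2 * ψ)) (hhalf : Real.sqrt (2 * ψ) ≤ 1 / 2) :
    ‖hInner v z'‖ ^ 2 ≤ 4 * Real.sqrt (2 * ψ) := by
  set Z : EuclideanSpace ℂ (Fin n) := (EuclideanSpace.equiv (Fin n) ℂ).symm z with hZdef
  set Z' : EuclideanSpace ℂ (Fin n) := (EuclideanSpace.equiv (Fin n) ℂ).symm z' with hZ'def
  set V : EuclideanSpace ℂ (Fin n) := (EuclideanSpace.equiv (Fin n) ℂ).symm v with hVdef
  rw [hNorm_eq] at hz hz' hv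
  rw [hInner_eq] at hzz' hvz ⊢
  set a : ℂ := ⟪Z, V⟫_ℂ with ha
  set w : EuclideanSpace ℂ (Fin n) := V - a • Z with hw
  have haV : ‖(⟪V, Z⟫_ℂ)‖ = ‖a‖ := by
    rw [ha, ← inner_conj_symm Z V, RCLike.norm_conj]
  have ha1 : ‖a‖ ≤ 1 := by
    calc ‖a‖ ≤ ‖Z‖ * ‖V‖ := norm_inner_le_norm Z V
    _ = 1 := by rw [hz, hv]; ring
  have hw2 : ‖w‖ ^ 2 = 1 - ‖a‖ ^ 2 := by
    have h := @norm_sub_sq ℂ _ _ _ _ V (a • Z)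
    rw [inner_smul_right, ← inner_conj_symm V Z, ← ha, norm_smul, hz, hv] at h
    rw [hw, h, Complex.mul_conj']
    simp [← Complex.ofReal_pow]
    ring
  have hwpsi : ‖w‖ ≤ Real.sqrt ψ := by
    have h1 : ‖w‖ ^ 2 ≤ ψ := by
      rw [hw2]; rw [haV] at hvz; linarith
    calc ‖w‖ = Real.sqrt (‖w‖ ^ 2) := by
          rw [Real.sqrt_sq (norm_nonneg _)]
    _ ≤ Real.sqrt ψ := Real.sqrt_le_sqrt h1
  have hdecomp : (⟪V, Z'⟫_ℂ) = (starRingEnd ℂ) a * ⟪Z, Z'⟫_ℂ + ⟪w, Z'⟫_ℂ := by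
    rw [hw, inner_sub_left, inner_smul_left]
    ring
  have hδ0 : 0 ≤ δ := le_trans (norm_nonneg _) hzz'
  have hwz' : ‖(⟪w, Z'⟫_ℂ)‖ ≤ Real.sqrt ψ := by
    calc ‖(⟪w, Z'⟫_ℂ)‖ ≤ ‖w‖ * ‖Z'‖ := norm_inner_le_norm w Z'
    _ = ‖w‖ := by rw [hz']; ring
    _ ≤ Real.sqrt ψ := hwpsi
  have hbound : ‖(⟪V, Z'⟫_ℂ)‖ ≤ δ + Real.sqrt ψ := by
    calc ‖(⟪V, Z'⟫_ℂ)‖ ≤ ‖(starRingEnd ℂ) a * ⟪Z, Z'⟫_ℂ‖ + ‖(⟪w, Z'⟫_ℂ)‖ := by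
          rw [hdecomp]; exact norm_add_le _ _
    _ = ‖a‖ * ‖(⟪Z, Z'⟫_ℂ)‖ + ‖(⟪w, Z'⟫_ℂ)‖ := by rw [norm_mul, RCLike.norm_conj]
    _ ≤ 1 * δ + Real.sqrt ψ := by
          exact add_le_add (mul_le_mul ha1 hzz' (norm_nonneg _) zero_le_one) hwz'
    _ = δ + Real.sqrt ψ := by ring
  set s := Real.sqrt (2 * ψ) with hs
  have hs0 : 0 ≤ s := Real.sqrt_nonneg _
  have hψs : Real.sqrt ψ ≤ s := Real.sqrt_le_sqrt (by linarith)
  have hsψ0 : 0 ≤ Real.sqrt ψ := Real.sqrt_nonneg _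
  have h2 : ‖(⟪V, Z'⟫_ℂ)‖ ≤ 2 * s := by linarith
  calc ‖(⟪V, Z'⟫_ℂ)‖ ^ 2 ≤ (2 * s) ^ 2 := by
        apply pow_le_pow_left₀ (norm_nonneg _) h2 2
  _ ≤ 4 * s := by nlinarith
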